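/- arXiv:2310.13131 — 2 statements merged into one kernel-verified Lean document; each statement's English description precedes it below -/
import Mathlib

section
/- Let Γ = γ¹ ∪ … ∪ γ^q be a germ of reduced singular curve at 0 ∈ ℂ². Then μ_D(Γ) ≥ μ_T(Γ) ≥ max(μ(γ¹), …, μ(γ^q)). Moreover, if Γ is irreducible (q = 1) then μ_T(Γ) = μ_D(Γ) = μ(Γ). -/
/-!
Statement 6 (Fortuny Ayuso–Ribón, "The Poincaré problem for reducible curves").

Let `Γ = γ¹ ∪ … ∪ γ^q` be a germ of reduced singular curve at `0 ∈ ℂ²`.  Then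
`μ_D(Γ) ≥ μ_T(Γ) ≥ max(μ(γ¹), …, μ(γ^q))`, and if `Γ` is irreducible then
`μ_T(Γ) = μ_D(Γ) = μ(Γ)`.

We identify a germ of curve with the Puiseux parametrizations
`t ↦ (t^(n j), c j (t))` of its branches.  Following the paper, the terminal
and divisorial virtual multiplicities `μ_T`, `μ_D` are computed through the set
`𝔠` of Puiseux roots of `τ⁻¹(Γ)` (where `τ(x,y) = (xⁿ,y)`, `n = lcm nⱼ`):
an `l`-jet `σ` is *terminal* if its fiber in `𝔠` has at least two elements and
the `(l+1)`-jet map is injective on it, and *divisorial* if the fiber has at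
least two elements and some element of the fiber is separated from all the
others by its `(l+1)`-jet; `μ_T(Γ)` (resp. `μ_D(Γ)`) is the number of terminal
(resp. divisorial) jets.  The virtual multiplicity `μ(γ)` of a branch of
multiplicity `n` is `n / e` where `e` is the smallest value `> 1` of the gcd
chain `l ↦ gcd(n, {exponents ≤ l in the support of c})`, and `μ(γ) = 1` if the
chain never takes a value `> 1` (i.e. `μ(γ) = q_{g-1}`, the denominator of the
last-but-one Puiseux characteristic exponent).
-/

open scoped Classical

namespace PoincareRed

/-- The gcd chain of a branch `t ↦ (tⁿ, c(t))`: gcd of `n` and of the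
exponents `≤ l` appearing in `c`. -/
noncomputable def gcdChain (n : ℕ) (c : PowerSeries ℂ) (l : ℕ) : ℕ :=
  Nat.gcd n (((Finset.range (l + 1)).filter fun k => PowerSeries.coeff (R := ℂ) k c ≠ 0).gcd id)

/-- The Puiseux root `c(ζ^l t^(N/n))` of a branch `t ↦ (tⁿ, c(t))`, where
`ζ = exp(2πi/n)` and `N` is the global ramification order. -/
noncomputable def rootSeries (N n : ℕ) (c : PowerSeries ℂ) (l : ℕ) : PowerSeries ℂ :=
  PowerSeries.mk fun m =>
    if (N / n) ∣ m then
      Complex.exp (2 * (Real.pi : ℂ) * Complex.I * (l : ℂ) / (n : ℂ)) ^ (m / (N / n)) *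
        PowerSeries.coeff (R := ℂ) (m / (N / n)) c
    else 0

/-- A germ of reduced curve at `0 ∈ ℂ²`, given by the Puiseux parametrizations
`t ↦ (t^(n j), c j (t))` of its branches `γ^j`, `j : Fin q`; the coordinates
are chosen so that `x = 0` is not tangent to any branch. -/
structure CurveGermData (q : ℕ) where
  /-- there is at least one branch -/
  hq : 1 ≤ q
  /-- the multiplicity `ν₀(γ^j)` of the branch `γ^j` -/
  n : Fin q → ℕ
  /-- the Puiseux series of the branch: `γ^j` is parametrized by `t ↦ (t^(n j), c j (t))` -/
  c : Fin q → PowerSeries ℂ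
  n_pos : ∀ j, 1 ≤ n j
  /-- `x = 0` is not tangent to `γ^j` (so `ν₀(γ^j) = n j`): `ord (c j) ≥ n j` -/
  not_tangent : ∀ j, ∀ m < n j, PowerSeries.coeff (R := ℂ) m (c j) = 0
  /-- each parametrization is primitive (the branch is irreducible and the
  parametrization is injective): the gcd chain eventually reaches `1` -/
  primitive : ∀ j, ∃ l, gcdChain (n j) (c j) l = 1
  /-- the branches are pairwise distinct (`Γ` is reduced) -/
  distinct : ∀ j j', j ≠ j' → ∀ l l',
    rootSeries (Finset.univ.lcm n) (n j) (c j) l ≠ rootSeries (Finset.univ.lcm n) (n j') (c j') l'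

namespace CurveGermData

variable {q : ℕ} (Γ : CurveGermData q)

/-- `n = lcm(n₁, …, n_q)`, the ramification order of `τ(x,y) = (xⁿ, y)`. -/
noncomputable def N : ℕ := Finset.univ.lcm Γ.n

/-- the multiplicity `ν₀(Γ) = n₁ + ⋯ + n_q` of `Γ` at the origin -/
noncomputable def mult : ℕ := ∑ j, Γ.n j

/-- `Γ` is singular at the origin -/
def Singular : Prop := 2 ≤ Γ.mult

/-- the set `𝔠` of Puiseux roots of the branches of `τ⁻¹(Γ)` -/
noncomputable def roots : Set (PowerSeries ℂ) :=
  {s | ∃ j : Fin q, ∃ l < Γ.n j, s = rootSeries Γ.N (Γ.n j) (Γ.c j) l}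

/-- the fiber over the `l`-jet `σ` of the jet map `j_l : 𝔠 → J^l` -/
noncomputable def jetFiber (l : ℕ) (σ : Polynomial ℂ) : Set (PowerSeries ℂ) :=
  {s | s ∈ Γ.roots ∧ PowerSeries.trunc (l + 1) s = σ}

/-- an `l`-jet `σ` is terminal if `j_l⁻¹(σ)` has at least two elements and
`j_{l+1}` is injective on `j_l⁻¹(σ)` -/
def IsTerminalJet (l : ℕ) (σ : Polynomial ℂ) : Prop :=
  2 ≤ (Γ.jetFiber l σ).ncard ∧ Set.InjOn (PowerSeries.trunc (l + 2)) (Γ.jetFiber l σ)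

/-- an `l`-jet `σ` is divisorial if `j_l⁻¹(σ)` has at least two elements and
some `σ' ∈ j_{l+1}(j_l⁻¹(σ))` has exactly one preimage in `j_l⁻¹(σ)` -/
def IsDivisorialJet (l : ℕ) (σ : Polynomial ℂ) : Prop :=
  2 ≤ (Γ.jetFiber l σ).ncard ∧
    ∃ s ∈ Γ.jetFiber l σ, ∀ s' ∈ Γ.jetFiber l σ,
      PowerSeries.trunc (l + 2) s' = PowerSeries.trunc (l + 2) s → s' = s

/-- the terminal virtual multiplicity `μ_T(Γ)`: the number of terminal jets,
i.e. the number of terminal (self-intersection `−1`) components of the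
exceptional divisor of the minimal resolution of `τ⁻¹(Γ)` -/
noncomputable def muT : ℕ := Set.ncard {p : ℕ × Polynomial ℂ | Γ.IsTerminalJet p.1 p.2}

/-- the divisorial virtual multiplicity `μ_D(Γ)`: the number of divisorial
jets, i.e. the number of components of the exceptional divisor of the minimal
resolution of `τ⁻¹(Γ)` meeting the strict transform of `τ⁻¹(Γ)` -/
noncomputable def muD : ℕ := Set.ncard {p : ℕ × Polynomial ℂ | Γ.IsDivisorialJet p.1 p.2}

/-- the virtual multiplicity `μ(γ^j) = q_{g−1}` of the branch `γ^j`
(the denominator of the last-but-one Puiseux characteristic exponent):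
`μ(γ^j) = n j / e_{g−1}` where `e_{g−1}` is the smallest value `> 1` of the
gcd chain, and `μ(γ^j) = 1` for a smooth branch. -/
noncomputable def muBranch (j : Fin q) : ℕ :=
  if h : {e : ℕ | 1 < e ∧ ∃ l, gcdChain (Γ.n j) (Γ.c j) l = e}.Nonempty then
    Γ.n j / sInf {e : ℕ | 1 < e ∧ ∃ l, gcdChain (Γ.n j) (Γ.c j) l = e}
  else 1

end CurveGermData



lemma exp_ratio (n : ℕ) (hn : 0 < n) (x : ℤ) :
    Complex.exp (2 * (Real.pi : ℂ) * Complex.I * (x : ℂ) / (n : ℂ)) = 1 ↔ (n : ℤ) ∣ x := by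
  rw [Complex.exp_eq_one_iff]
  have hn' : (n : ℂ) ≠ 0 := Nat.cast_ne_zero.2 hn.ne'
  have hπ : (Real.pi : ℂ) ≠ 0 := by exact_mod_cast Real.pi_ne_zero
  have hne : 2 * (Real.pi : ℂ) * Complex.I ≠ 0 :=
    mul_ne_zero (mul_ne_zero two_ne_zero hπ) Complex.I_ne_zero
  constructor
  · rintro ⟨m, hm⟩
    refine ⟨m, ?_⟩
    have h : (x : ℂ) = (m : ℂ) * n := by
      field_simp at hm
      linear_combination hm
    have h2 : x = m * n := by exact_mod_cast h
    exact h2.trans (mul_comm m n)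
  · rintro ⟨m, hm⟩
    refine ⟨m, ?_⟩
    have h : (x : ℂ) = (n : ℂ) * m := by exact_mod_cast congrArg (Int.cast : ℤ → ℂ) hm
    field_simp [h]
    linear_combination h

lemma dvd_mul_finset_gcd (n : ℕ) (x : ℤ) (S : Finset ℕ) :
    ((n : ℤ) ∣ x * (S.gcd id : ℕ)) ↔ ∀ k ∈ S, (n : ℤ) ∣ x * k := by
  constructor
  · intro h k hk
    have h1 : (S.gcd id : ℕ) ∣ k := Finset.gcd_dvd hk
    exact h.trans (mul_dvd_mul_left x (Int.natCast_dvd_natCast.2 h1))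
  · classical
    induction S using Finset.induction_on with
    | empty => simp
    | insert a S ha ih =>
      intro h
      have hg : (n : ℤ) ∣ x * (S.gcd id : ℕ) := ih fun k hk => h k (Finset.mem_insert_of_mem hk)
      have haa : (n : ℤ) ∣ x * a := h a (Finset.mem_insert_self a S)
      rw [Finset.gcd_insert]
      have hb := Nat.gcd_eq_gcd_ab a (S.gcd id)
      have hbz : (x : ℤ) * (Nat.gcd a (S.gcd id) : ℤ) =
          (x * a) * Nat.gcdA a (S.gcd id) + (x * (S.gcd id : ℕ)) * Nat.gcdB a (S.gcd id) := by
        rw [hb]; ring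
      show (n : ℤ) ∣ x * (GCDMonoid.gcd (id a) (S.gcd id) : ℕ)
      have hgcd : GCDMonoid.gcd (id a) (S.gcd id) = Nat.gcd a (S.gcd id) := rfl
      rw [hgcd]
      exact hbz ▸ dvd_add (haa.mul_right _) (hg.mul_right _)

lemma nat_dvd_mul_iff (n g : ℕ) (hn : 0 < n) (x : ℤ) :
    (n : ℤ) ∣ x * g ↔ ((n / Nat.gcd n g : ℕ) : ℤ) ∣ x := by
  set d := Nat.gcd n g with hd
  have hdpos : 0 < d := Nat.gcd_pos_of_pos_left g hn
  have hn' : (n / d) * d = n := Nat.div_mul_cancel (Nat.gcd_dvd_left n g)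
  have hg' : (g / d) * d = g := Nat.div_mul_cancel (Nat.gcd_dvd_right n g)
  have hcop : Nat.Coprime (n / d) (g / d) := Nat.coprime_div_gcd_div_gcd hdpos
  have hcopZ : IsCoprime ((n / d : ℕ) : ℤ) ((g / d : ℕ) : ℤ) := by
    rw [Int.isCoprime_iff_gcd_eq_one, Int.gcd_natCast_natCast]
    exact hcop
  constructor
  · intro h
    have h2 : ((n / d : ℕ) : ℤ) * d ∣ (x * (g / d : ℕ)) * d := by
      have hxx : (x * (g / d : ℕ)) * (d : ℤ) = x * g := by
        rw [mul_assoc]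
        norm_cast
        rw [hg']
      rw [hxx]
      exact_mod_cast hn' ▸ h
    have h3 : ((n / d : ℕ) : ℤ) ∣ x * (g / d : ℕ) :=
      (mul_dvd_mul_iff_right (by exact_mod_cast hdpos.ne' : (d : ℤ) ≠ 0)).1 h2
    exact hcopZ.dvd_of_dvd_mul_right h3
  · intro h
    calc (n : ℤ) = ((n / d : ℕ) : ℤ) * d := by exact_mod_cast hn'.symm
    _ ∣ x * d := mul_dvd_mul_right h d
    _ ∣ x * g := mul_dvd_mul_left x (by exact_mod_cast Nat.gcd_dvd_right n g)

lemma zeta_pow_eq (n : ℕ) (hn : 0 < n) (a b k : ℕ) :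
    Complex.exp (2 * (Real.pi : ℂ) * Complex.I * (a : ℂ) / (n : ℂ)) ^ k =
      Complex.exp (2 * (Real.pi : ℂ) * Complex.I * (b : ℂ) / (n : ℂ)) ^ k ↔
      (n : ℤ) ∣ ((a : ℤ) - b) * k := by
  rw [← Complex.exp_nat_mul, ← Complex.exp_nat_mul]
  have hx : Complex.exp ((k : ℂ) * (2 * (Real.pi : ℂ) * Complex.I * (a : ℂ) / (n : ℂ))) =
      Complex.exp ((k : ℂ) * (2 * (Real.pi : ℂ) * Complex.I * (b : ℂ) / (n : ℂ))) ↔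
      Complex.exp ((k : ℂ) * (2 * (Real.pi : ℂ) * Complex.I * (a : ℂ) / (n : ℂ)) -
        (k : ℂ) * (2 * (Real.pi : ℂ) * Complex.I * (b : ℂ) / (n : ℂ))) = 1 := by
    rw [Complex.exp_sub, div_eq_one_iff_eq (Complex.exp_ne_zero _)]
  rw [hx]
  have heq : (k : ℂ) * (2 * (Real.pi : ℂ) * Complex.I * (a : ℂ) / (n : ℂ)) -
      (k : ℂ) * (2 * (Real.pi : ℂ) * Complex.I * (b : ℂ) / (n : ℂ)) =
      2 * (Real.pi : ℂ) * Complex.I * ((((a : ℤ) - b) * k : ℤ) : ℂ) / (n : ℂ) := by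
    push_cast
    ring
  rw [heq, exp_ratio n hn]

lemma trunc_root_eq_iff (N n : ℕ) (c : PowerSeries ℂ) (hn : 0 < n) (hdvd : n ∣ N) (hN : 0 < N)
    (a b l : ℕ) :
    PowerSeries.trunc (l + 1) (rootSeries N n c a) =
      PowerSeries.trunc (l + 1) (rootSeries N n c b) ↔
      ((n / gcdChain n c (l / (N / n)) : ℕ) : ℤ) ∣ (a : ℤ) - (b : ℤ) := by
  have hM : 0 < N / n := Nat.div_pos (Nat.le_of_dvd hN hdvd) hn
  set M := N / n with hMdef
  set S := (Finset.range (l / M + 1)).filter fun k => PowerSeries.coeff (R := ℂ) k c ≠ 0 with hSdef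
  have coeff_root : ∀ (u m : ℕ), PowerSeries.coeff (R := ℂ) m (rootSeries N n c u) =
      if M ∣ m then Complex.exp (2 * (Real.pi : ℂ) * Complex.I * (u : ℂ) / (n : ℂ)) ^ (m / M) *
        PowerSeries.coeff (R := ℂ) (m / M) c else 0 := by
    intro u m
    rw [rootSeries, PowerSeries.coeff_mk]
  have step1 : (PowerSeries.trunc (l + 1) (rootSeries N n c a) =
      PowerSeries.trunc (l + 1) (rootSeries N n c b)) ↔
      ∀ m, m ≤ l → PowerSeries.coeff (R := ℂ) m (rootSeries N n c a) =
        PowerSeries.coeff (R := ℂ) m (rootSeries N n c b) := by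
    constructor
    · intro h m hm
      have h2 := congrArg (fun p => Polynomial.coeff p m) h
      simpa only [PowerSeries.coeff_trunc, if_pos (Nat.lt_succ_of_le hm)] using h2
    · intro h
      ext m
      simp only [PowerSeries.coeff_trunc]
      split_ifs with hlt
      · exact h m (Nat.lt_succ_iff.1 hlt)
      · rfl
  rw [step1]
  have step2 : (∀ m, m ≤ l → PowerSeries.coeff (R := ℂ) m (rootSeries N n c a) =
      PowerSeries.coeff (R := ℂ) m (rootSeries N n c b)) ↔
      ∀ k ∈ S, (n : ℤ) ∣ ((a : ℤ) - b) * k := by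
    constructor
    · intro h k hk
      rw [hSdef, Finset.mem_filter, Finset.mem_range, Nat.lt_succ_iff] at hk
      obtain ⟨hkle, hck⟩ := hk
      have hm : M * k ≤ l := by
        rw [Nat.mul_comm]
        exact (Nat.le_div_iff_mul_le hM).1 hkle
      have h2 := h (M * k) hm
      rw [coeff_root, coeff_root, if_pos (Dvd.intro k rfl), if_pos (Dvd.intro k rfl),
        Nat.mul_div_cancel_left k hM] at h2
      exact (zeta_pow_eq n hn a b k).1 (mul_right_cancel₀ hck h2)
    · intro h m hm
      rw [coeff_root, coeff_root]
      split_ifs with hd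
      · by_cases hck : PowerSeries.coeff (R := ℂ) (m / M) c = 0
        · rw [hck, mul_zero, mul_zero]
        · have hkS : m / M ∈ S := by
            rw [hSdef, Finset.mem_filter, Finset.mem_range, Nat.lt_succ_iff]
            exact ⟨Nat.div_le_div_right hm, hck⟩
          rw [(zeta_pow_eq n hn a b (m / M)).2 (h _ hkS)]
      · rfl
  rw [step2, ← dvd_mul_finset_gcd, nat_dvd_mul_iff n _ hn]
  rfl



lemma gcdChain_pos (n : ℕ) (c : PowerSeries ℂ) (l : ℕ) (hn : 0 < n) : 0 < gcdChain n c l :=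
  Nat.gcd_pos_of_pos_left _ hn

lemma gcdChain_dvd (n : ℕ) (c : PowerSeries ℂ) (l : ℕ) : gcdChain n c l ∣ n :=
  Nat.gcd_dvd_left _ _

lemma gcdChain_anti (n : ℕ) (c : PowerSeries ℂ) {l l' : ℕ} (h : l ≤ l') :
    gcdChain n c l' ∣ gcdChain n c l := by
  refine Nat.dvd_gcd (Nat.gcd_dvd_left _ _) (Finset.dvd_gcd fun k hk => ?_)
  refine (Nat.gcd_dvd_right _ _).trans (Finset.gcd_dvd ?_)
  rw [Finset.mem_filter, Finset.mem_range] at hk ⊢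
  exact ⟨by omega, hk.2⟩

lemma gcdChain_zero (n : ℕ) (c : PowerSeries ℂ) (hn : 0 < n)
    (htang : ∀ m < n, PowerSeries.coeff (R := ℂ) m c = 0) : gcdChain n c 0 = n := by
  have h : ((Finset.range 1).filter fun k => PowerSeries.coeff (R := ℂ) k c ≠ 0) = ∅ := by
    ext k
    simp only [Finset.mem_filter, Finset.mem_range, Finset.notMem_empty, iff_false, not_and,
      Nat.lt_one_iff, not_not]
    rintro rfl
    exact htang 0 hn
  rw [gcdChain, h]
  simp

lemma ncard_image_jets {α : Type*} (n m : ℕ) (hm : 0 < m) (hmn : m ≤ n) (f : ℕ → α)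
    (hf : ∀ a b, a < n → b < n → (f a = f b ↔ (m : ℤ) ∣ (a : ℤ) - b)) :
    (f '' (Set.Iio n)).ncard = m := by
  haveI : NeZero m := ⟨hm.ne'⟩
  set g : ZMod m → α := fun x => f x.val with hg
  have claim1 : ∀ a, a < n → f a = g ((a : ZMod m)) := by
    intro a ha
    have hv : ((a : ZMod m)).val = a % m := ZMod.val_natCast m a
    rw [hg]
    simp only [hv]
    refine (hf a (a % m) ha (lt_of_lt_of_le (Nat.mod_lt a hm) hmn)).2 ?_
    have := (Nat.modEq_iff_dvd (n := m) (a := a % m) (b := a)).1 (Nat.mod_modEq a m)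
    omega
  have him : f '' (Set.Iio n) = Set.range g := by
    ext x
    constructor
    · rintro ⟨a, ha, rfl⟩
      exact ⟨(a : ZMod m), (claim1 a ha).symm⟩
    · rintro ⟨y, rfl⟩
      exact ⟨y.val, lt_of_lt_of_le (ZMod.val_lt y) hmn, rfl⟩
  have ginj : Function.Injective g := by
    intro x y hxy
    have hx : x.val < n := lt_of_lt_of_le (ZMod.val_lt x) hmn
    have hy : y.val < n := lt_of_lt_of_le (ZMod.val_lt y) hmn
    have hd : (m : ℤ) ∣ (x.val : ℤ) - y.val := (hf _ _ hx hy).1 hxy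
    have hmeq : x.val % m = y.val % m := by
      have h1 := (Nat.modEq_iff_dvd (n := m) (a := y.val) (b := x.val)).2 hd
      exact h1.symm
    have : x.val = y.val := by
      rw [Nat.mod_eq_of_lt (ZMod.val_lt x), Nat.mod_eq_of_lt (ZMod.val_lt y)] at hmeq
      exact hmeq
    exact ZMod.val_injective m this
  rw [him, ← Set.image_univ, Set.ncard_image_of_injective _ ginj, Set.ncard_univ, Nat.card_zmod]


lemma trunc_congr {u v : PowerSeries ℂ} {k k' : ℕ} (h : k ≤ k')
    (he : PowerSeries.trunc k' u = PowerSeries.trunc k' v) :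
    PowerSeries.trunc k u = PowerSeries.trunc k v := by
  ext m
  have h2 := congrArg (fun p => Polynomial.coeff p m) he
  simp only [PowerSeries.coeff_trunc] at h2 ⊢
  split_ifs with hm
  · rw [if_pos (lt_of_lt_of_le hm h), if_pos (lt_of_lt_of_le hm h)] at h2
    exact h2
  · rfl

lemma int_eq_zero_of_dvd_of_lt (n : ℕ) (x : ℤ) (h : (n : ℤ) ∣ x) (h2 : |x| < n) : x = 0 := by
  rcases h with ⟨k, rfl⟩
  by_contra hk0
  have hk : k ≠ 0 := by rintro rfl; simp at hk0
  have h1 : (1 : ℤ) ≤ |k| := Int.one_le_abs (by exact_mod_cast hk)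
  have hn0 : (0 : ℤ) ≤ n := by positivity
  have : (n : ℤ) * 1 ≤ (n : ℤ) * |k| := by
    apply mul_le_mul_of_nonneg_left h1 hn0
  rw [abs_mul, abs_of_nonneg hn0] at h2
  omega

lemma branch_struct (n : ℕ) (c : PowerSeries ℂ) (hn2 : 2 ≤ n)
    (htang : ∀ m < n, PowerSeries.coeff (R := ℂ) m c = 0) (hprim : ∃ l, gcdChain n c l = 1) :
    ∃ Λ e, gcdChain n c Λ = e ∧ gcdChain n c (Λ + 1) = 1 ∧ 2 ≤ e ∧ e ∣ n ∧
      (∀ l, gcdChain n c l ≠ 1 → l ≤ Λ) ∧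
      sInf {e' : ℕ | 1 < e' ∧ ∃ l, gcdChain n c l = e'} = e := by
  classical
  set L := Nat.find hprim with hLdef
  have hL : gcdChain n c L = 1 := Nat.find_spec hprim
  have hL0 : L ≠ 0 := by
    intro h
    rw [h, gcdChain_zero n c (by omega) htang] at hL
    omega
  set Λ := L - 1 with hΛdef
  have hΛL : Λ + 1 = L := by omega
  have hdΛ : gcdChain n c Λ ≠ 1 := Nat.find_min hprim (by omega)
  set e := gcdChain n c Λ with hedef
  have hepos : 0 < e := gcdChain_pos n c Λ (by omega)
  have he2 : 2 ≤ e := by omega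
  have hlast : ∀ l, gcdChain n c l ≠ 1 → l ≤ Λ := by
    intro l hl
    by_contra h
    have hLl : L ≤ l := by omega
    exact hl (Nat.eq_one_of_dvd_one (hL ▸ gcdChain_anti n c hLl))
  refine ⟨Λ, e, rfl, hΛL ▸ hL, he2, gcdChain_dvd n c Λ, hlast, ?_⟩
  have hmem : e ∈ {e' : ℕ | 1 < e' ∧ ∃ l, gcdChain n c l = e'} := ⟨he2, Λ, rfl⟩
  refine le_antisymm (Nat.sInf_le hmem) (le_csInf ⟨e, hmem⟩ ?_)
  rintro e' ⟨h1, l, hl⟩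
  have hlΛ : l ≤ Λ := hlast l (by omega)
  have : e ∣ e' := hl ▸ gcdChain_anti n c hlΛ
  exact Nat.le_of_dvd (by omega) this

section rootlevel

variable (N n : ℕ) (c : PowerSeries ℂ)

lemma root_eq_of_dvd (hn : 0 < n) (hdvd : n ∣ N) (hN : 0 < N) (a b : ℕ) (h : (n : ℤ) ∣ (a : ℤ) - b) :
    rootSeries N n c a = rootSeries N n c b := by
  ext m
  have ht : PowerSeries.trunc (m + 1) (rootSeries N n c a) =
      PowerSeries.trunc (m + 1) (rootSeries N n c b) := by
    rw [trunc_root_eq_iff N n c hn hdvd hN]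
    exact dvd_trans (Int.natCast_dvd_natCast.2 (Nat.div_dvd_of_dvd (gcdChain_dvd n c _))) h
  have h2 := congrArg (fun p => Polynomial.coeff p m) ht
  simpa only [PowerSeries.coeff_trunc, if_pos (Nat.lt_succ_self m)] using h2

lemma root_inj_of_prim (hn : 0 < n) (hdvd : n ∣ N) (hN : 0 < N) (hprim : ∃ l, gcdChain n c l = 1) (a b : ℕ)
    (h : rootSeries N n c a = rootSeries N n c b) : (n : ℤ) ∣ (a : ℤ) - b := by
  obtain ⟨l, hl⟩ := hprim
  have hM : 0 < N / n := Nat.div_pos (Nat.le_of_dvd hN hdvd) hn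
  have ht : PowerSeries.trunc ((N / n) * l + 1) (rootSeries N n c a) =
      PowerSeries.trunc ((N / n) * l + 1) (rootSeries N n c b) := by rw [h]
  rw [trunc_root_eq_iff N n c hn hdvd hN, Nat.mul_div_cancel_left l hM, hl] at ht
  simpa using ht

end rootlevel

namespace CurveGermData

variable {q : ℕ} (Γ : CurveGermData q)

lemma N_pos : 0 < Γ.N := by
  rw [N, Nat.pos_iff_ne_zero]
  intro h
  rw [Finset.lcm_eq_zero_iff] at h
  obtain ⟨j, -, hj⟩ := h
  have := Γ.n_pos j
  omega

lemma n_dvd_N (j : Fin q) : Γ.n j ∣ Γ.N := Finset.dvd_lcm (Finset.mem_univ j)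

lemma roots_eq : Γ.roots = ⋃ j, (fun a => rootSeries Γ.N (Γ.n j) (Γ.c j) a) '' Set.Iio (Γ.n j) := by
  ext s
  simp only [roots, Set.mem_setOf_eq, Set.mem_iUnion, Set.mem_image, Set.mem_Iio]
  constructor
  · rintro ⟨j, l, hl, rfl⟩; exact ⟨j, l, hl, rfl⟩
  · rintro ⟨j, l, hl, rfl⟩; exact ⟨j, l, hl, rfl⟩

lemma roots_finite : Γ.roots.Finite := by
  rw [Γ.roots_eq]
  exact Set.finite_iUnion fun j => (Set.finite_Iio _).image _

lemma root_mem_roots (j : Fin q) {a : ℕ} (ha : a < Γ.n j) :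
    rootSeries Γ.N (Γ.n j) (Γ.c j) a ∈ Γ.roots := ⟨j, a, ha, rfl⟩

lemma root_injOn {j j' : Fin q} {a a' : ℕ} (ha : a < Γ.n j) (ha' : a' < Γ.n j')
    (h : rootSeries Γ.N (Γ.n j) (Γ.c j) a = rootSeries Γ.N (Γ.n j') (Γ.c j') a') :
    j = j' ∧ a = a' := by
  by_cases hjj : j = j'
  · subst hjj
    refine ⟨rfl, ?_⟩
    have hd := root_inj_of_prim Γ.N (Γ.n j) (Γ.c j) (Γ.n_pos j) (Γ.n_dvd_N j) Γ.N_pos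
      (Γ.primitive j) a a' h
    have := int_eq_zero_of_dvd_of_lt (Γ.n j) _ hd (by rw [abs_sub_lt_iff]; constructor <;> push_cast <;> omega)
    omega
  · exact absurd h (Γ.distinct j j' hjj a a')

lemma jetFiber_subset (l : ℕ) (σ : Polynomial ℂ) : Γ.jetFiber l σ ⊆ Γ.roots := fun s hs => hs.1

lemma jetFiber_finite (l : ℕ) (σ : Polynomial ℂ) : (Γ.jetFiber l σ).Finite :=
  Γ.roots_finite.subset (Γ.jetFiber_subset l σ)

/-- a separation level: beyond it, distinct roots have distinct jets -/
lemma exists_sep : ∃ L₀, ∀ s ∈ Γ.roots, ∀ s' ∈ Γ.roots, s ≠ s' → ∀ l, L₀ ≤ l →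
    PowerSeries.trunc (l + 1) s ≠ PowerSeries.trunc (l + 1) s' := by
  classical
  have hfin := Γ.roots_finite
  set F := hfin.toFinset with hF
  set sep : PowerSeries ℂ → PowerSeries ℂ → ℕ := fun s s' =>
    if h : ∃ m, PowerSeries.coeff (R := ℂ) m s ≠ PowerSeries.coeff (R := ℂ) m s' then Nat.find h + 1 else 0
    with hsep
  refine ⟨F.sup fun s => F.sup fun s' => sep s s', ?_⟩
  intro s hs s' hs' hne l hl heq
  have hex : ∃ m, PowerSeries.coeff (R := ℂ) m s ≠ PowerSeries.coeff (R := ℂ) m s' := by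
    by_contra hc
    push_neg at hc
    exact hne (PowerSeries.ext hc)
  have hle : sep s s' ≤ F.sup fun u => F.sup fun u' => sep u u' := by
    refine le_trans ?_ (Finset.le_sup (f := fun u => F.sup fun u' => sep u u') (hfin.mem_toFinset.2 hs))
    exact Finset.le_sup (f := fun u' => sep s u') (hfin.mem_toFinset.2 hs')
  have hsepval : sep s s' = Nat.find hex + 1 := by simp only [hsep]; exact dif_pos hex
  rw [hsepval] at hle
  have hfind : Nat.find hex < l + 1 := by omega
  have h2 := congrArg (fun p => Polynomial.coeff p (Nat.find hex)) heq
  simp only [PowerSeries.coeff_trunc, if_pos hfind] at h2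
  exact Nat.find_spec hex h2

end CurveGermData

namespace CurveGermData

variable {q : ℕ} (Γ : CurveGermData q)

lemma terminal_finite' :
    {p : ℕ × Polynomial ℂ | Γ.IsTerminalJet p.1 p.2} ⊆ {p | Γ.IsDivisorialJet p.1 p.2} := by
  rintro p ⟨h2, hinj⟩
  refine ⟨h2, ?_⟩
  have hne : (Γ.jetFiber p.1 p.2).Nonempty := by
    rw [← Set.ncard_pos (Γ.jetFiber_finite p.1 p.2)]
    omega
  obtain ⟨s, hs⟩ := hne
  exact ⟨s, hs, fun s' hs' he => hinj hs' hs he⟩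

lemma divisorial_finite : {p : ℕ × Polynomial ℂ | Γ.IsDivisorialJet p.1 p.2}.Finite := by
  obtain ⟨L₀, hL₀⟩ := Γ.exists_sep
  have hsub : {p : ℕ × Polynomial ℂ | Γ.IsDivisorialJet p.1 p.2} ⊆
      (fun x : PowerSeries ℂ × ℕ => (x.2, PowerSeries.trunc (x.2 + 1) x.1)) ''
        (Γ.roots ×ˢ Set.Iio L₀) := by
    rintro ⟨l, σ⟩ ⟨h2, -⟩
    obtain ⟨s, s', hs, hs', hne⟩ := (Set.one_lt_ncard_iff (Γ.jetFiber_finite l σ)).1 h2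
    have hl : l < L₀ := by
      by_contra h
      exact hL₀ s hs.1 s' hs'.1 hne l (le_of_not_gt h) (hs.2.trans hs'.2.symm)
    exact ⟨(s, l), ⟨hs.1, hl⟩, by simp [hs.2]⟩
  exact ((Γ.roots_finite.prod (Set.finite_Iio _)).image _).subset hsub

lemma terminal_finite : {p : ℕ × Polynomial ℂ | Γ.IsTerminalJet p.1 p.2}.Finite :=
  Γ.divisorial_finite.subset Γ.terminal_finite'

lemma muT_le_muD : Γ.muT ≤ Γ.muD :=
  Set.ncard_le_ncard Γ.terminal_finite' Γ.divisorial_finite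

lemma exists_leaf (Λ : ℕ) (σ : Polynomial ℂ) (h2 : 2 ≤ (Γ.jetFiber Λ σ).ncard) :
    ∃ p : ℕ × Polynomial ℂ, Γ.IsTerminalJet p.1 p.2 ∧ Γ.jetFiber p.1 p.2 ⊆ Γ.jetFiber Λ σ := by
  classical
  obtain ⟨L₀, hL₀⟩ := Γ.exists_sep
  set Q : ℕ → Prop := fun l =>
    ∃ σ', 2 ≤ (Γ.jetFiber l σ').ncard ∧ Γ.jetFiber l σ' ⊆ Γ.jetFiber Λ σ with hQ
  have hQΛ : Q Λ := ⟨σ, h2, subset_rfl⟩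
  have hQlt : ∀ l, Q l → l < L₀ := by
    rintro l ⟨σ', hn2, -⟩
    obtain ⟨s, s', hs, hs', hne⟩ := (Set.one_lt_ncard_iff (Γ.jetFiber_finite l σ')).1 hn2
    by_contra h
    exact hL₀ s hs.1 s' hs'.1 hne l (le_of_not_gt h) (hs.2.trans hs'.2.symm)
  have hΛL₀ : Λ ≤ L₀ := le_of_lt (hQlt Λ hQΛ)
  obtain ⟨σ', hn2, hsub⟩ : Q (Nat.findGreatest Q L₀) := Nat.findGreatest_spec hΛL₀ hQΛ
  set l := Nat.findGreatest Q L₀ with hl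
  refine ⟨(l, σ'), ⟨hn2, ?_⟩, hsub⟩
  intro s hs s' hs' he
  by_contra hne
  have hQl1 : Q (l + 1) := by
    refine ⟨PowerSeries.trunc (l + 2) s, ?_, ?_⟩
    · rw [show (2 : ℕ) ≤ (Γ.jetFiber (l + 1) (PowerSeries.trunc (l + 2) s)).ncard ↔
        1 < (Γ.jetFiber (l + 1) (PowerSeries.trunc (l + 2) s)).ncard from Iff.rfl,
        Set.one_lt_ncard_iff (Γ.jetFiber_finite _ _)]
      exact ⟨s, s', ⟨hs.1, rfl⟩, ⟨hs'.1, he.symm⟩, hne⟩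
    · rintro u ⟨hu, hut⟩
      have h3 : PowerSeries.trunc (l + 1) u = PowerSeries.trunc (l + 1) s :=
        trunc_congr (by omega) hut
      exact hsub ⟨hu, h3.trans hs.2⟩
  exact Nat.findGreatest_is_greatest (Nat.lt_succ_self l) (le_of_lt (hQlt _ hQl1)) hQl1

lemma jetFiber_zero : Γ.jetFiber 0 0 = Γ.roots := by
  ext s
  refine ⟨fun hs => hs.1, fun hs => ⟨hs, ?_⟩⟩
  obtain ⟨j, a, ha, rfl⟩ := hs
  ext m
  rw [PowerSeries.coeff_trunc]
  split_ifs with hm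
  · interval_cases m
    rw [rootSeries, PowerSeries.coeff_mk]
    simp [Γ.not_tangent j 0 (Γ.n_pos j)]
  · simp

lemma roots_two (hsing : Γ.Singular) : 2 ≤ Γ.roots.ncard := by
  rw [show (2 : ℕ) ≤ Γ.roots.ncard ↔ 1 < Γ.roots.ncard from Iff.rfl,
    Set.one_lt_ncard_iff Γ.roots_finite]
  by_cases h : ∃ j, 2 ≤ Γ.n j
  · obtain ⟨j, hj⟩ := h
    refine ⟨rootSeries Γ.N (Γ.n j) (Γ.c j) 0, rootSeries Γ.N (Γ.n j) (Γ.c j) 1,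
      Γ.root_mem_roots j (by omega), Γ.root_mem_roots j (by omega), fun he => ?_⟩
    have hd := root_inj_of_prim Γ.N (Γ.n j) (Γ.c j) (Γ.n_pos j) (Γ.n_dvd_N j) Γ.N_pos
      (Γ.primitive j) 0 1 he
    have := int_eq_zero_of_dvd_of_lt (Γ.n j) _ hd (by simp; omega)
    omega
  · push_neg at h
    have hq2 : 2 ≤ q := by
      by_contra hq
      have hq1 : q = 1 := by have := Γ.hq; omega
      subst hq1
      have hs := hsing
      rw [Singular, mult, Fin.sum_univ_one] at hs
      exact absurd hs (by have := h 0; omega)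
    refine ⟨rootSeries Γ.N (Γ.n ⟨0, by omega⟩) (Γ.c ⟨0, by omega⟩) 0,
      rootSeries Γ.N (Γ.n ⟨1, by omega⟩) (Γ.c ⟨1, by omega⟩) 0,
      Γ.root_mem_roots _ (Γ.n_pos _), Γ.root_mem_roots _ (Γ.n_pos _),
      Γ.distinct _ _ (by simp [Fin.ext_iff]) 0 0⟩

end CurveGermData

namespace CurveGermData

variable {q : ℕ} (Γ : CurveGermData q)

lemma muT_pos (hsing : Γ.Singular) : 1 ≤ Γ.muT := by
  have h2 : 2 ≤ (Γ.jetFiber 0 0).ncard := by rw [Γ.jetFiber_zero]; exact Γ.roots_two hsing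
  obtain ⟨p, hp, -⟩ := Γ.exists_leaf 0 0 h2
  exact (Set.ncard_pos Γ.terminal_finite).2 ⟨p, hp⟩

lemma muBranch_le_muT (hsing : Γ.Singular) (j : Fin q) : Γ.muBranch j ≤ Γ.muT := by
  classical
  by_cases hn1 : Γ.n j = 1
  · have hμ : Γ.muBranch j = 1 := by
      rw [muBranch, dif_neg]
      rintro ⟨e', he'1, l, hl⟩
      rw [gcdChain, hn1, Nat.gcd_one_left] at hl
      omega
    rw [hμ]
    exact Γ.muT_pos hsing
  · have hn2 : 2 ≤ Γ.n j := by have := Γ.n_pos j; omega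
    obtain ⟨Λ, e, heΛ, hΛ1, he2, hedvd, hlast, hsInf⟩ :=
      branch_struct (Γ.n j) (Γ.c j) hn2 (Γ.not_tangent j) (Γ.primitive j)
    set n := Γ.n j with hn
    set m := n / e with hm
    have hnpos : 0 < n := by omega
    have hmpos : 0 < m := Nat.div_pos (Nat.le_of_dvd hnpos hedvd) (by omega)
    have hme : m * e = n := Nat.div_mul_cancel hedvd
    have h2m : 2 * m ≤ n := by nlinarith
    have hmn : m ≤ n := Nat.div_le_self _ _
    have hμ : Γ.muBranch j = m := by
      rw [muBranch, dif_pos ⟨e, he2, Λ, heΛ⟩, ← hn, hsInf, hm]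
    have hM : 0 < Γ.N / n := Nat.div_pos (Nat.le_of_dvd Γ.N_pos (Γ.n_dvd_N j)) hnpos
    set M := Γ.N / n with hM'
    set ℓ := M * Λ + (M - 1) with hℓ
    have hℓM : ℓ / M = Λ := by
      rw [hℓ, Nat.mul_add_div hM, Nat.div_eq_of_lt (by omega)]
      omega
    have hℓ1M : (ℓ + 1) / M = Λ + 1 := by
      have : ℓ + 1 = M * (Λ + 1) := by rw [Nat.mul_succ]; omega
      rw [this, Nat.mul_div_cancel_left _ hM]
    set f : ℕ → Polynomial ℂ := fun a =>
      PowerSeries.trunc (ℓ + 1) (rootSeries Γ.N n (Γ.c j) a) with hf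
    have hfiff : ∀ a b : ℕ, f a = f b ↔ (m : ℤ) ∣ (a : ℤ) - b := by
      intro a b
      rw [hf]
      simp only
      rw [trunc_root_eq_iff Γ.N n (Γ.c j) hnpos (Γ.n_dvd_N j) Γ.N_pos, ← hM', hℓM, heΛ, ← hm]
    set Jset := f '' Set.Iio n with hJset
    have hJcard : Jset.ncard = m :=
      ncard_image_jets n m hmpos hmn f fun a b _ _ => hfiff a b
    have hmodd : ∀ a : ℕ, (m : ℤ) ∣ ((a : ℤ)) - ((a % m : ℕ) : ℤ) := by
      intro a
      exact (Nat.modEq_iff_dvd (n := m) (a := a % m) (b := a)).1 (Nat.mod_modEq a m)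
    have hfib2 : ∀ σ ∈ Jset, 2 ≤ (Γ.jetFiber ℓ σ).ncard := by
      rintro σ ⟨a, ha, rfl⟩
      set a₀ := a % m with ha₀
      have ha₀m : a₀ < m := Nat.mod_lt a hmpos
      rw [show (2 : ℕ) ≤ (Γ.jetFiber ℓ (f a)).ncard ↔ 1 < (Γ.jetFiber ℓ (f a)).ncard from Iff.rfl,
        Set.one_lt_ncard_iff (Γ.jetFiber_finite _ _)]
      refine ⟨rootSeries Γ.N n (Γ.c j) a₀, rootSeries Γ.N n (Γ.c j) (a₀ + m),
        ⟨Γ.root_mem_roots j (by omega), ?_⟩, ⟨Γ.root_mem_roots j (by omega), ?_⟩, fun he => ?_⟩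
      · show f a₀ = f a
        rw [hfiff]
        rw [show (a₀ : ℤ) - a = -((a : ℤ) - a₀) from (neg_sub _ _).symm]
        exact dvd_neg.2 (hmodd a)
      · show f (a₀ + m) = f a
        rw [hfiff]
        rw [show ((a₀ + m : ℕ) : ℤ) - a = -((a : ℤ) - a₀) + m by push_cast; ring]
        exact dvd_add (dvd_neg.2 (hmodd a)) (dvd_refl _)
      · have hd := root_inj_of_prim Γ.N n (Γ.c j) hnpos (Γ.n_dvd_N j) Γ.N_pos
          (Γ.primitive j) a₀ (a₀ + m) he
        have := int_eq_zero_of_dvd_of_lt n _ hd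
          (by rw [abs_sub_lt_iff]; push_cast; omega)
        omega
    have hleaf : ∀ σ ∈ Jset, ∃ p : ℕ × Polynomial ℂ,
        Γ.IsTerminalJet p.1 p.2 ∧ Γ.jetFiber p.1 p.2 ⊆ Γ.jetFiber ℓ σ := fun σ hσ =>
      Γ.exists_leaf ℓ σ (hfib2 σ hσ)
    choose! F hFT hFsub using hleaf
    rw [hμ, ← hJcard]
    refine Set.ncard_le_ncard_of_injOn F (fun σ hσ => hFT σ hσ) ?_ Γ.terminal_finite
    intro σ hσ σ' hσ' hFeq
    have hne : (Γ.jetFiber (F σ).1 (F σ).2).Nonempty := by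
      rw [← Set.ncard_pos (Γ.jetFiber_finite _ _)]
      have := (hFT σ hσ).1
      omega
    obtain ⟨s, hs⟩ := hne
    have h1 : s ∈ Γ.jetFiber ℓ σ := hFsub σ hσ hs
    have h2 : s ∈ Γ.jetFiber ℓ σ' := hFsub σ' hσ' (hFeq ▸ hs)
    exact h1.2.symm.trans h2.2

end CurveGermData

lemma nat_div_dvd_div {a b c : ℕ} (ha : 0 < a) (hab : a ∣ b) (hbc : b ∣ c) : c / b ∣ c / a := by
  obtain ⟨k, rfl⟩ := hbc
  obtain ⟨i, rfl⟩ := hab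
  rcases Nat.eq_zero_or_pos i with hi | hi
  · subst hi
    simp
  · rw [Nat.mul_div_cancel_left k (by positivity), mul_assoc, Nat.mul_div_cancel_left _ ha]
    exact Dvd.intro_left i rfl

namespace CurveGermData

lemma q1_case (Γ : CurveGermData 1) (hsing : Γ.Singular) (j : Fin 1) :
    Γ.muT = Γ.muBranch j ∧ Γ.muD = Γ.muBranch j := by
  classical
  have hj : j = 0 := Subsingleton.elim j 0
  subst hj
  have hNeq : Γ.N = Γ.n 0 := by
    rw [N, Finset.univ_unique, Finset.lcm_singleton]
    simp
  have hn2 : 2 ≤ Γ.n 0 := by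
    have hs := hsing
    rw [Singular, mult, Fin.sum_univ_one] at hs
    exact hs
  obtain ⟨Λ, e, heΛ, hΛ1, he2, hedvd, hlast, hsInf⟩ :=
    branch_struct (Γ.n 0) (Γ.c 0) hn2 (Γ.not_tangent 0) (Γ.primitive 0)
  set n := Γ.n 0 with hn
  set c := Γ.c 0 with hc
  have hnpos : 0 < n := by omega
  have hM1 : Γ.N / n = 1 := by rw [hNeq]; exact Nat.div_self hnpos
  set m := n / e with hm
  have hmpos : 0 < m := Nat.div_pos (Nat.le_of_dvd hnpos hedvd) (by omega)
  have hme : m * e = n := Nat.div_mul_cancel hedvd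
  have h2m : 2 * m ≤ n := by nlinarith
  have hμ : Γ.muBranch 0 = m := by
    rw [muBranch, dif_pos ⟨e, he2, Λ, heΛ⟩, ← hn, ← hc, hsInf, hm]
  have hfiffl : ∀ (l a b : ℕ),
      PowerSeries.trunc (l + 1) (rootSeries Γ.N n c a) =
        PowerSeries.trunc (l + 1) (rootSeries Γ.N n c b) ↔
      ((n / gcdChain n c l : ℕ) : ℤ) ∣ (a : ℤ) - b := by
    intro l a b
    rw [trunc_root_eq_iff Γ.N n c hnpos (hNeq ▸ dvd_refl n) Γ.N_pos, hM1, Nat.div_one]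
  have hrootsmem : ∀ s ∈ Γ.roots, ∃ b, b < n ∧ s = rootSeries Γ.N n c b := by
    rintro s ⟨j', b, hb, rfl⟩
    have : j' = 0 := Subsingleton.elim j' 0
    subst this
    exact ⟨b, hb, rfl⟩
  have hrootinj : ∀ a b : ℕ, a < n → b < n → rootSeries Γ.N n c a = rootSeries Γ.N n c b →
      a = b := by
    intro a b ha hb he'
    have hd := root_inj_of_prim Γ.N n c hnpos (hNeq ▸ dvd_refl n) Γ.N_pos (Γ.primitive 0) a b he'
    have := int_eq_zero_of_dvd_of_lt n _ hd (by rw [abs_sub_lt_iff]; push_cast; omega)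
    omega
  set f : ℕ → Polynomial ℂ := fun a =>
    PowerSeries.trunc (Λ + 1) (rootSeries Γ.N n c a) with hf
  set Jset := f '' Set.Iio n with hJset
  have hfiff : ∀ a b : ℕ, f a = f b ↔ (m : ℤ) ∣ (a : ℤ) - b := by
    intro a b
    rw [hf]
    simp only
    rw [hfiffl Λ a b, heΛ, ← hm]
  have hJcard : Jset.ncard = m :=
    ncard_image_jets n m hmpos (Nat.div_le_self _ _) f fun a b _ _ => hfiff a b
  have hmodd : ∀ (m' a : ℕ), (m' : ℤ) ∣ ((a : ℤ)) - ((a % m' : ℕ) : ℤ) := fun m' a =>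
    (Nat.modEq_iff_dvd (n := m') (a := a % m') (b := a)).1 (Nat.mod_modEq a m')
  -- the image is contained in the terminal set
  have hA : (Prod.mk Λ) '' Jset ⊆ {p : ℕ × Polynomial ℂ | Γ.IsTerminalJet p.1 p.2} := by
    rintro p ⟨σ, ⟨a, ha, rfl⟩, rfl⟩
    constructor
    · rw [show (2 : ℕ) ≤ (Γ.jetFiber Λ (f a)).ncard ↔ 1 < (Γ.jetFiber Λ (f a)).ncard
        from Iff.rfl, Set.one_lt_ncard_iff (Γ.jetFiber_finite _ _)]
      set a₀ := a % m with ha₀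
      have ha₀m : a₀ < m := Nat.mod_lt a hmpos
      refine ⟨rootSeries Γ.N n c a₀, rootSeries Γ.N n c (a₀ + m),
        ⟨Γ.root_mem_roots 0 (by omega), ?_⟩, ⟨Γ.root_mem_roots 0 (by omega), ?_⟩, fun he => ?_⟩
      · show f a₀ = f a
        rw [hfiff]
        rw [show (a₀ : ℤ) - a = -((a : ℤ) - a₀) from (neg_sub _ _).symm]
        exact dvd_neg.2 (hmodd m a)
      · show f (a₀ + m) = f a
        rw [hfiff]
        rw [show ((a₀ + m : ℕ) : ℤ) - a = -((a : ℤ) - a₀) + m by push_cast; ring]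
        exact dvd_add (dvd_neg.2 (hmodd m a)) (dvd_refl _)
      · have := hrootinj a₀ (a₀ + m) (by omega) (by omega) he
        omega
    · intro s hs s' hs' he
      obtain ⟨b, hb, rfl⟩ := hrootsmem s hs.1
      obtain ⟨b', hb', rfl⟩ := hrootsmem s' hs'.1
      rw [hfiffl (Λ + 1) b b', hΛ1, Nat.div_one] at he
      have := int_eq_zero_of_dvd_of_lt n _ he (by rw [abs_sub_lt_iff]; push_cast; omega)
      have hbb : b = b' := by omega
      rw [hbb]
  -- the divisorial set is contained in the image
  have hC : {p : ℕ × Polynomial ℂ | Γ.IsDivisorialJet p.1 p.2} ⊆ (Prod.mk Λ) '' Jset := by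
    rintro ⟨l, σ⟩ ⟨h2, s, hs, huniq⟩
    obtain ⟨b, hb, rfl⟩ := hrootsmem s hs.1
    -- the fiber has two distinct elements, hence `gcdChain n c l ≥ 2`, hence `l ≤ Λ`
    obtain ⟨s₁, s₂, hs₁, hs₂, hne12⟩ := (Set.one_lt_ncard_iff (Γ.jetFiber_finite l σ)).1 h2
    obtain ⟨b₁, hb₁, rfl⟩ := hrootsmem s₁ hs₁.1
    obtain ⟨b₂, hb₂, rfl⟩ := hrootsmem s₂ hs₂.1
    have hbne : b₁ ≠ b₂ := fun h => hne12 (by rw [h])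
    have hdl2 : gcdChain n c l ≠ 1 := by
      intro h1
      have h3 := (hfiffl l b₁ b₂).1 (hs₁.2.trans hs₂.2.symm)
      rw [h1, Nat.div_one] at h3
      have := int_eq_zero_of_dvd_of_lt n _ h3 (by rw [abs_sub_lt_iff]; push_cast; omega)
      omega
    have hlΛ : l ≤ Λ := hlast l hdl2
    -- if `l < Λ` then no element of the fiber is alone in its `(l+1)`-jet class
    have hlΛ' : l = Λ := by
      by_contra hlt
      have hl1 : l + 1 ≤ Λ := by omega
      have hd1 : e ∣ gcdChain n c (l + 1) := heΛ ▸ gcdChain_anti n c hl1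
      have hdpos : 0 < gcdChain n c (l + 1) := gcdChain_pos n c _ hnpos
      have hd2 : 2 ≤ gcdChain n c (l + 1) := le_trans he2 (Nat.le_of_dvd hdpos hd1)
      set m' := n / gcdChain n c (l + 1) with hm'
      have hm'pos : 0 < m' := Nat.div_pos (Nat.le_of_dvd hnpos (gcdChain_dvd n c _)) hdpos
      have hm'e : m' * gcdChain n c (l + 1) = n := Nat.div_mul_cancel (gcdChain_dvd n c _)
      have h2m' : 2 * m' ≤ n := by nlinarith
      have hdvd_step : ((n / gcdChain n c l : ℕ) : ℤ) ∣ ((m' : ℕ) : ℤ) := by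
        have := nat_div_dvd_div hdpos (gcdChain_anti n c (by omega : l ≤ l + 1))
          (gcdChain_dvd n c l)
        exact Int.natCast_dvd_natCast.2 (hm' ▸ this)
      set b₀ := b % m' with hb₀
      have hb₀m : b₀ < m' := Nat.mod_lt b hm'pos
      have hmem : ∀ u : ℕ, (m' : ℤ) ∣ (u : ℤ) - b → u < n →
          rootSeries Γ.N n c u ∈ Γ.jetFiber l σ := by
        intro u hu hun
        refine ⟨Γ.root_mem_roots 0 hun, ?_⟩
        have : PowerSeries.trunc (l + 1) (rootSeries Γ.N n c u) =
            PowerSeries.trunc (l + 1) (rootSeries Γ.N n c b) := by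
          rw [hfiffl l u b]
          exact dvd_trans hdvd_step hu
        rw [this, hs.2]
      have hj1 : ∀ u : ℕ, (m' : ℤ) ∣ (u : ℤ) - b →
          PowerSeries.trunc (l + 2) (rootSeries Γ.N n c u) =
            PowerSeries.trunc (l + 2) (rootSeries Γ.N n c b) := by
        intro u hu
        rw [show l + 2 = (l + 1) + 1 from rfl, hfiffl (l + 1) u b]
        exact hu
      have hu₁ : (m' : ℤ) ∣ ((b₀ : ℕ) : ℤ) - b := by
        rw [show ((b₀ : ℕ) : ℤ) - b = -((b : ℤ) - b₀) from by ring]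
        exact dvd_neg.2 (hmodd m' b)
      have hu₂ : (m' : ℤ) ∣ ((b₀ + m' : ℕ) : ℤ) - b := by
        rw [show ((b₀ + m' : ℕ) : ℤ) - b = -((b : ℤ) - b₀) + m' by push_cast; ring]
        exact dvd_add (dvd_neg.2 (hmodd m' b)) (dvd_refl _)
      have he₁ := huniq _ (hmem b₀ hu₁ (by omega)) (hj1 b₀ hu₁)
      have he₂ := huniq _ (hmem (b₀ + m') hu₂ (by omega)) (hj1 (b₀ + m') hu₂)
      have := hrootinj b₀ (b₀ + m') (by omega) (by omega) (he₁.trans he₂.symm)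
      omega
    subst hlΛ'
    exact ⟨σ, ⟨b, hb, hs.2⟩, rfl⟩
  have hTD := Γ.terminal_finite'
  have hTeq : {p : ℕ × Polynomial ℂ | Γ.IsTerminalJet p.1 p.2} = (Prod.mk Λ) '' Jset :=
    Set.Subset.antisymm (fun p hp => hC (hTD hp)) hA
  have hDeq : {p : ℕ × Polynomial ℂ | Γ.IsDivisorialJet p.1 p.2} = (Prod.mk Λ) '' Jset :=
    Set.Subset.antisymm hC (fun p hp => hTD (hA hp))
  have hcard : ((Prod.mk Λ) '' Jset).ncard = m := by
    rw [Set.ncard_image_of_injective _ (fun x y hxy => by simpa using hxy), hJcard]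
  constructor
  · rw [muT, hTeq, hcard, hμ]
  · rw [muD, hDeq, hcard, hμ]

end CurveGermData

/-- For a germ of reduced singular curve
`Γ = γ¹ ∪ … ∪ γ^q` at `0 ∈ ℂ²` one has
`μ_D(Γ) ≥ μ_T(Γ) ≥ max(μ(γ¹), …, μ(γ^q))`; moreover, if `Γ` is irreducible
(`q = 1`) then `μ_T(Γ) = μ_D(Γ) = μ(Γ)`. -/
theorem stmt6 (q : ℕ) (Γ : CurveGermData q) (hsing : Γ.Singular) :
    Γ.muT ≤ Γ.muD ∧ (∀ j : Fin q, Γ.muBranch j ≤ Γ.muT) ∧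
    (q = 1 → ∀ j : Fin q, Γ.muT = Γ.muBranch j ∧ Γ.muD = Γ.muBranch j) := by
  refine ⟨Γ.muT_le_muD, fun j => Γ.muBranch_le_muT hsing j, ?_⟩
  rintro rfl j
  exact Γ.q1_case hsing j

end PoincareRed
end

section
/- Let p ≥ 3 be an odd integer, Γ the curve y² = x^p with Puiseux parametrization θ(t) = (t², t^p), 𝓕 the foliation defined by the vector field X = 2x ∂/∂x + p y ∂/∂y (which has first integral y²/x^p), and 𝓗 the hamiltonian foliation of f = y² − x^p, defined by Y = 2y ∂/∂x + p x^{p−1} ∂/∂y. Then dθ(t)(t ∂/∂t) = X(θ(t)) and dθ(t)(t^{p−1} ∂/∂t) = Y(θ(t)); consequently θ*X = t ∂/∂t and θ*Y = t^{p−1} ∂/∂t, so Z₀(𝓕, Γ) = 1 and Z₀(𝓗, Γ) = p − 1. In particular the ratio Z₀(𝓕, Γ)/Z₀(𝓗, Γ) = 1/(p−1) is not bounded from below by a positive constant independent of p, even though ν₀(Γ)/μ(Γ) = 2 for all such p. -/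
/-!
Example of Fortuny Ayuso–Ribón: for odd `p ≥ 3`, the curve `Γ : y² = xᵖ` with
Puiseux parametrization `θ(t) = (t², tᵖ)` is invariant by the foliation `𝓕`
defined by `X = 2x ∂/∂x + p y ∂/∂y` (first integral `y²/xᵖ`) and by the
hamiltonian foliation `𝓗` of `f = y² − xᵖ`, defined by
`Y = 2y ∂/∂x + p x^(p−1) ∂/∂y`.  One has `dθ(t)(t ∂/∂t) = X(θ(t))` and
`dθ(t)(t^(p−1) ∂/∂t) = Y(θ(t))`, so the pulled-back vector fields are
`θ*X = t ∂/∂t` and `θ*Y = t^(p−1) ∂/∂t` (uniquely determined away from `0`);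
hence `Z₀(𝓕, Γ) = 1` (the vanishing order of `t ↦ t` at `0`) and
`Z₀(𝓗, Γ) = p − 1` (the vanishing order of `t ↦ t^(p−1)` at `0`).
In particular the ratio `Z₀(𝓕,Γ)/Z₀(𝓗,Γ) = 1/(p−1)` is not bounded from below
by a positive constant independent of `p`, even though `ν₀(Γ)/μ(Γ) = 2/1 = 2`
for all such `p`.
-/

/-- The vanishing order at `0 ∈ ℂ` of a function `g : ℂ → ℂ`:
the least `n` such that the `n`-th derivative of `g` at `0` is nonzero. -/
noncomputable def vanishingOrderAtZero (g : ℂ → ℂ) : ℕ :=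
  sInf {n : ℕ | iteratedDeriv n g 0 ≠ 0}

lemma iterderiv_pow_aux (m : ℕ) : ∀ (k : ℕ) (t : ℂ),
    iteratedDeriv k (fun s : ℂ => s ^ m) t = (m.descFactorial k : ℂ) * t ^ (m - k) := by
  intro k
  induction k with
  | zero => intro t; simp
  | succ k ih =>
    intro t
    rw [iteratedDeriv_succ]
    have : deriv (iteratedDeriv k (fun s : ℂ => s ^ m)) t
        = deriv (fun s : ℂ => (m.descFactorial k : ℂ) * s ^ (m - k)) t := by
      apply Filter.EventuallyEq.deriv_eq
      filter_upwards with s using ih s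
    rw [this]
    rcases le_or_gt m k with h | h
    · have h1 : m - k = 0 := by omega
      have h2 : m.descFactorial (k + 1) = 0 := by
        rw [Nat.descFactorial_eq_zero_iff_lt]; omega
      simp [h1, h2]
    · have : deriv (fun s : ℂ => (m.descFactorial k : ℂ) * s ^ (m - k)) t
          = (m.descFactorial k : ℂ) * ((m - k : ℕ) * t ^ (m - k - 1)) := by
        simp [deriv_const_mul, mul_comm]
      rw [this, Nat.descFactorial_succ]
      push_cast
      have h3 : m - k - 1 = m - (k + 1) := by omega
      rw [h3]; ring

lemma vord_pow_aux (m : ℕ) (hm : 0 < m) :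
    vanishingOrderAtZero (fun t : ℂ => t ^ m) = m := by
  have hS : {n : ℕ | iteratedDeriv n (fun s : ℂ => s ^ m) 0 ≠ 0} = {m} := by
    ext n
    simp only [Set.mem_setOf_eq, Set.mem_singleton_iff, iterderiv_pow_aux]
    constructor
    · intro h
      by_contra hne
      rcases lt_or_gt_of_ne hne with h1 | h1
      · exact h (by simp [Nat.sub_ne_zero_of_lt h1, zero_pow])
      · exact h (by simp [Nat.descFactorial_eq_zero_iff_lt.mpr h1])
    · rintro rfl
      simp [Nat.descFactorial_self, Nat.factorial_ne_zero]
  unfold vanishingOrderAtZero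
  rw [hS, csInf_singleton]

theorem stmt15 (p : ℕ) (hp : Odd p) (hp3 : 3 ≤ p)
    (θ : ℂ → ℂ × ℂ) (hθ : ∀ t, θ t = (t ^ 2, t ^ p))
    (X : ℂ × ℂ → ℂ × ℂ) (hX : ∀ z : ℂ × ℂ, X z = (2 * z.1, (p : ℂ) * z.2))
    (Y : ℂ × ℂ → ℂ × ℂ) (hY : ∀ z : ℂ × ℂ, Y z = (2 * z.2, (p : ℂ) * z.1 ^ (p - 1))) :
    -- the two tangency identities `dθ(t)(t ∂/∂t) = X(θ(t))` and
    -- `dθ(t)(t^(p−1) ∂/∂t) = Y(θ(t))`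
    (∀ t : ℂ, t • deriv θ t = X (θ t)) ∧
    (∀ t : ℂ, t ^ (p - 1) • deriv θ t = Y (θ t)) ∧
    -- consequently `θ*X = t ∂/∂t` and `θ*Y = t^(p−1) ∂/∂t`
    (∀ g : ℂ → ℂ, (∀ t, g t • deriv θ t = X (θ t)) → ∀ t : ℂ, t ≠ 0 → g t = t) ∧
    (∀ g : ℂ → ℂ, (∀ t, g t • deriv θ t = Y (θ t)) → ∀ t : ℂ, t ≠ 0 → g t = t ^ (p - 1)) ∧
    -- so `Z₀(𝓕, Γ) = 1` and `Z₀(𝓗, Γ) = p − 1`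
    vanishingOrderAtZero (fun t => t) = 1 ∧
    vanishingOrderAtZero (fun t => t ^ (p - 1)) = p - 1 ∧
    -- the ratio `Z₀(𝓕,Γ)/Z₀(𝓗,Γ) = 1/(p−1)` is not bounded from below by a
    -- positive constant independent of `p`
    (∀ c : ℝ, 0 < c → ∃ q : ℕ, Odd q ∧ 3 ≤ q ∧ (1 : ℝ) / ((q : ℝ) - 1) < c) ∧
    -- even though `ν₀(Γ) = 2` and `μ(Γ) = 1`, so `ν₀(Γ)/μ(Γ) = 2`
    ((2 : ℝ) / (1 : ℝ) = 2) := by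
  have hθ' : θ = fun t => (t ^ 2, t ^ p) := funext hθ
  have hpp : p - 1 + 1 = p := by omega
  have hder : ∀ t : ℂ, deriv θ t = (2 * t, (p : ℂ) * t ^ (p - 1)) := by
    intro t
    have h : HasDerivAt θ (((2 : ℕ) : ℂ) * t ^ (2 - 1), ((p : ℕ) : ℂ) * t ^ (p - 1)) t := by
      rw [hθ']
      exact HasDerivAt.prodMk (hasDerivAt_pow 2 t) (hasDerivAt_pow p t)
    rw [h.deriv]
    norm_num
  have htt : ∀ t : ℂ, t ^ (p - 1) * t = t ^ p := by
    intro t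
    rw [← pow_succ, hpp]
  constructor
  · intro t
    rw [hder, hX, hθ]
    simp only [Prod.smul_mk, smul_eq_mul]
    refine Prod.ext ?_ ?_
    · simp; ring
    · simp only
      rw [mul_comm t, mul_assoc, htt]
  refine ⟨?_, ?_, ?_, ?_, ?_, ?_, ?_⟩
  · intro t
    rw [hder, hY, hθ]
    simp only [Prod.smul_mk, smul_eq_mul]
    refine Prod.ext ?_ ?_
    · simp only
      rw [mul_comm (2 : ℂ) t, ← mul_assoc, htt]; ring
    · simp only
      rw [← pow_mul]
      rw [mul_comm ((p : ℂ)), ← mul_assoc, ← pow_add]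
      have he : p - 1 + (p - 1) = 2 * (p - 1) := by omega
      rw [he]; ring
  · intro g hg t ht
    have h := hg t
    rw [hder, hX, hθ] at h
    have h1 := congrArg Prod.fst h
    simp only [Prod.smul_mk, smul_eq_mul] at h1
    have : g t * t = t * t := by
      have := h1
      ring_nf at this ⊢
      linear_combination this / 2
    exact mul_right_cancel₀ ht this
  · intro g hg t ht
    have h := hg t
    rw [hder, hY, hθ] at h
    have h1 := congrArg Prod.fst h
    simp only [Prod.smul_mk, smul_eq_mul] at h1
    have : g t * t = t ^ (p - 1) * t := by
      rw [htt]
      linear_combination h1 / 2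
    exact mul_right_cancel₀ ht this
  · have := vord_pow_aux 1 one_pos
    simpa using this
  · exact vord_pow_aux (p - 1) (by omega)
  · intro c hc
    refine ⟨2 * ⌈1 / c⌉₊ + 3, ⟨⌈1 / c⌉₊ + 1, by ring⟩, by omega, ?_⟩
    have h1 : (1 : ℝ) / c ≤ ⌈1 / c⌉₊ := Nat.le_ceil _
    have h2 : ((2 * ⌈1 / c⌉₊ + 3 : ℕ) : ℝ) - 1 = 2 * ⌈1 / c⌉₊ + 2 := by
      push_cast; ring
    rw [h2]
    have h3 : (1 : ℝ) / c < 2 * ⌈1 / c⌉₊ + 2 := by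
      have : (0 : ℝ) ≤ ⌈1 / c⌉₊ := Nat.cast_nonneg _
      nlinarith
    have h4 : (0 : ℝ) < 1 / c := by positivity
    calc (1 : ℝ) / (2 * ⌈1 / c⌉₊ + 2) < 1 / (1 / c) := by
          exact one_div_lt_one_div_of_lt h4 h3
      _ = c := one_div_one_div c
  · norm_num
end
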